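/- If an ideal 𝓘 of graphs has the strong Erdős–Hajnal property with constant ε, then it has the Erdős–Hajnal property: there exists c > 0 such that every G ∈ 𝓘 has a clique or stable set of size at least |G|^c. -/

import Mathlib

/-- A finite graph, presented as a number of vertices together with a graph on `Fin n`. -/
abbrev GraphOn := Σ n : ℕ, SimpleGraph (Fin n)

/-- `H` is (isomorphic to) an induced subgraph of `G`. -/
def Embeds (H G : GraphOn) : Prop :=
  ∃ f : Fin H.1 → Fin G.1, Function.Injective f ∧
    ∀ a b, H.2.Adj a b ↔ G.2.Adj (f a) (f b)

/-- A class of graphs has the strong Erdős–Hajnal property: for some `ε > 0`, every member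
with at least two vertices has two disjoint linear-sized sets that are complete or
anticomplete to each other. -/
def StrongEH (I : Set GraphOn) : Prop :=
  ∃ ε : ℝ, 0 < ε ∧ ∀ G ∈ I, 2 ≤ G.1 →
    ∃ A B : Finset (Fin G.1), Disjoint A B ∧
      ε * (G.1 : ℝ) ≤ A.card ∧ ε * (G.1 : ℝ) ≤ B.card ∧
      ((∀ a ∈ A, ∀ b ∈ B, G.2.Adj a b) ∨ (∀ a ∈ A, ∀ b ∈ B, ¬ G.2.Adj a b))

/-- An ideal: a class of finite graphs closed under (isomorphism and) induced subgraphs. -/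
def IsIdeal (I : Set GraphOn) : Prop :=
  ∀ G ∈ I, ∀ H : GraphOn, Embeds H G → H ∈ I

/-- The clique number ω(G). -/
noncomputable def gOmega (G : GraphOn) : ℕ :=
  sSup {k | ∃ s : Finset (Fin G.1), G.2.IsNClique k s}

/-- The independence number α(G). -/
noncomputable def gAlpha (G : GraphOn) : ℕ :=
  sSup {k | ∃ s : Finset (Fin G.1), G.2ᶜ.IsNClique k s}

open Finset SimpleGraph

open Finset SimpleGraph

lemma cliqueSet_bdd (G : GraphOn) :
    BddAbove {k | ∃ s : Finset (Fin G.1), G.2.IsNClique k s} := by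
  refine ⟨G.1, ?_⟩
  rintro k ⟨s, hs⟩
  rw [← hs.2]
  simpa using Finset.card_le_univ s

lemma cliqueSet_ne (G : GraphOn) :
    {k | ∃ s : Finset (Fin G.1), G.2.IsNClique k s}.Nonempty :=
  ⟨0, ∅, by simp [SimpleGraph.isNClique_empty]⟩

lemma le_gOmega {G : GraphOn} {k : ℕ} {s : Finset (Fin G.1)} (h : G.2.IsNClique k s) :
    k ≤ gOmega G := le_csSup (cliqueSet_bdd G) ⟨s, h⟩

lemma gOmega_mem (G : GraphOn) : ∃ s : Finset (Fin G.1), G.2.IsNClique (gOmega G) s :=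
  Nat.sSup_mem (cliqueSet_ne G) (cliqueSet_bdd G)

/-- complement as a GraphOn -/
def gc (G : GraphOn) : GraphOn := ⟨G.1, G.2ᶜ⟩

lemma gOmega_gc (G : GraphOn) : gOmega (gc G) = gAlpha G := rfl

lemma gAlpha_gc (G : GraphOn) : gAlpha (gc G) = gOmega G := by
  have hcc : G.2ᶜᶜ = G.2 := compl_compl G.2
  show sSup {k | ∃ s : Finset (Fin G.1), G.2ᶜᶜ.IsNClique k s} = sSup {k | ∃ s : Finset (Fin G.1), G.2.IsNClique k s}
  rw [hcc]

/-- one vertex gives a clique of size 1 -/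
lemma one_le_gOmega (G : GraphOn) (h : 1 ≤ G.1) : 1 ≤ gOmega G :=
  le_gOmega (s := {⟨0, h⟩}) (by constructor <;> simp [SimpleGraph.IsClique])

/-- induced subgraph on a finset -/
noncomputable def ind (G : GraphOn) (s : Finset (Fin G.1)) : GraphOn :=
  ⟨s.card, SimpleGraph.comap (fun i => (s.equivFin.symm i : Fin G.1)) G.2⟩

lemma ind_inj (G : GraphOn) (s : Finset (Fin G.1)) :
    Function.Injective (fun i : Fin s.card => (s.equivFin.symm i : Fin G.1)) :=
  fun a b h => s.equivFin.symm.injective (Subtype.val_injective h)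

lemma ind_mem (G : GraphOn) (s : Finset (Fin G.1)) (i : Fin s.card) :
    (s.equivFin.symm i : Fin G.1) ∈ s := (s.equivFin.symm i).2

lemma ind_adj (G : GraphOn) (s : Finset (Fin G.1)) (i j : Fin s.card) :
    (ind G s).2.Adj i j ↔ G.2.Adj (s.equivFin.symm i : Fin G.1) (s.equivFin.symm j : Fin G.1) :=
  Iff.rfl

lemma ind_gc (G : GraphOn) (s : Finset (Fin G.1)) : ind (gc G) s = gc (ind G s) := by
  unfold ind gc
  refine Sigma.ext rfl (heq_of_eq ?_)
  ext i j
  simp only [comap_adj, compl_adj]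
  constructor
  · rintro ⟨h1, h2⟩
    exact ⟨fun h => h1 (by rw [h]), h2⟩
  · rintro ⟨h1, h2⟩
    exact ⟨fun h => h1 (ind_inj G s h), h2⟩

lemma ind_embeds (G : GraphOn) (s : Finset (Fin G.1)) : Embeds (ind G s) G :=
  ⟨fun i => (s.equivFin.symm i : Fin G.1), ind_inj G s, fun _ _ => Iff.rfl⟩

lemma clique_image {H G : GraphOn} {f : Fin H.1 → Fin G.1} (hf : Function.Injective f)
    (hadj : ∀ a b, H.2.Adj a b ↔ G.2.Adj (f a) (f b)) {k : ℕ} {s : Finset (Fin H.1)}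
    (h : H.2.IsNClique k s) : G.2.IsNClique k (s.image f) := by
  constructor
  · rintro x hx y hy hxy
    simp only [Finset.coe_image, Set.mem_image, Finset.mem_coe] at hx hy
    obtain ⟨a, ha, rfl⟩ := hx
    obtain ⟨b, hb, rfl⟩ := hy
    exact (hadj a b).mp (h.1 ha hb (fun h' => hxy (by rw [h'])))
  · rw [Finset.card_image_of_injective _ hf, h.2]

lemma gOmega_embeds {H G : GraphOn} (h : Embeds H G) : gOmega H ≤ gOmega G := by
  obtain ⟨f, hf, hadj⟩ := h
  obtain ⟨s, hs⟩ := gOmega_mem H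
  exact le_gOmega (clique_image hf hadj hs)

lemma embeds_gc {H G : GraphOn} (h : Embeds H G) : Embeds (gc H) (gc G) := by
  obtain ⟨f, hf, hadj⟩ := h
  refine ⟨f, hf, fun a b => ?_⟩
  simp only [gc, compl_adj, hf.ne_iff, hadj]
  exact (compl_adj H.2 a b).trans (and_congr hf.ne_iff.symm (not_congr (hadj a b)))

lemma gAlpha_embeds {H G : GraphOn} (h : Embeds H G) : gAlpha H ≤ gAlpha G :=
  gOmega_embeds (embeds_gc h)

/-- the key sum lemma -/
lemma gOmega_add_le (G : GraphOn) (A B : Finset (Fin G.1)) (hd : Disjoint A B)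
    (hc : ∀ a ∈ A, ∀ b ∈ B, G.2.Adj a b) :
    gOmega (ind G A) + gOmega (ind G B) ≤ gOmega G := by
  obtain ⟨sA, hsA⟩ := gOmega_mem (ind G A)
  obtain ⟨sB, hsB⟩ := gOmega_mem (ind G B)
  set fA : Fin (ind G A).1 → Fin G.1 := fun i => (A.equivFin.symm i : Fin G.1) with hfA
  set fB : Fin (ind G B).1 → Fin G.1 := fun i => (B.equivFin.symm i : Fin G.1) with hfB
  have hA' : G.2.IsNClique (gOmega (ind G A)) (sA.image fA) :=
    clique_image (f := fA) (ind_inj G A) (fun _ _ => Iff.rfl) hsA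
  have hB' : G.2.IsNClique (gOmega (ind G B)) (sB.image fB) :=
    clique_image (f := fB) (ind_inj G B) (fun _ _ => Iff.rfl) hsB
  have hAsub : sA.image fA ⊆ A := by
    intro x hx
    obtain ⟨i, _, rfl⟩ := Finset.mem_image.mp hx
    exact ind_mem G A i
  have hBsub : sB.image fB ⊆ B := by
    intro x hx
    obtain ⟨i, _, rfl⟩ := Finset.mem_image.mp hx
    exact ind_mem G B i
  refine le_gOmega (s := sA.image fA ∪ sB.image fB) ⟨?_, ?_⟩
  · rintro x hx y hy hxy
    simp only [Finset.coe_union, Set.mem_union, Finset.mem_coe] at hx hy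
    rcases hx with hx | hx <;> rcases hy with hy | hy
    · exact hA'.1 hx hy hxy
    · exact hc x (hAsub hx) y (hBsub hy)
    · exact (hc y (hAsub hy) x (hBsub hx)).symm
    · exact hB'.1 hx hy hxy
  · rw [Finset.card_union_of_disjoint (hd.mono hAsub hBsub), hA'.2, hB'.2]

lemma prod_ineq (G : GraphOn) (A B : Finset (Fin G.1)) (hd : Disjoint A B)
    (hc : ∀ a ∈ A, ∀ b ∈ B, G.2.Adj a b) :
    gOmega (ind G A) * gAlpha (ind G A) + gOmega (ind G B) * gAlpha (ind G B)
      ≤ gOmega G * gAlpha G := by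
  have h1 := gOmega_add_le G A B hd hc
  have h2 := gAlpha_embeds (ind_embeds G A)
  have h3 := gAlpha_embeds (ind_embeds G B)
  calc gOmega (ind G A) * gAlpha (ind G A) + gOmega (ind G B) * gAlpha (ind G B)
      ≤ gOmega (ind G A) * gAlpha G + gOmega (ind G B) * gAlpha G := by
        exact Nat.add_le_add (Nat.mul_le_mul_left _ h2) (Nat.mul_le_mul_left _ h3)
    _ = (gOmega (ind G A) + gOmega (ind G B)) * gAlpha G := (add_mul _ _ _).symm
    _ ≤ gOmega G * gAlpha G := Nat.mul_le_mul_right _ h1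

lemma prod_ineq' (G : GraphOn) (A B : Finset (Fin G.1)) (hd : Disjoint A B)
    (hc : ∀ a ∈ A, ∀ b ∈ B, ¬ G.2.Adj a b) :
    gOmega (ind G A) * gAlpha (ind G A) + gOmega (ind G B) * gAlpha (ind G B)
      ≤ gOmega G * gAlpha G := by
  have hc' : ∀ a ∈ A, ∀ b ∈ B, (gc G).2.Adj a b := by
    intro a ha b hb
    exact ⟨fun h => (Finset.disjoint_left.mp hd ha) (h ▸ hb), hc a ha b hb⟩
  have h := prod_ineq (gc G) A B hd hc'
  rw [ind_gc, ind_gc, gOmega_gc, gAlpha_gc, gOmega_gc, gAlpha_gc, gOmega_gc, gAlpha_gc] at h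
  calc gOmega (ind G A) * gAlpha (ind G A) + gOmega (ind G B) * gAlpha (ind G B)
      = gAlpha (ind G A) * gOmega (ind G A) + gAlpha (ind G B) * gOmega (ind G B) := by ring
    _ ≤ gAlpha G * gOmega G := h
    _ = gOmega G * gAlpha G := by ring

theorem stmt_15 (I : Set GraphOn) (hI : IsIdeal I) (hEH : StrongEH I) :
    ∃ c : ℝ, 0 < c ∧ ∀ G ∈ I, (G.1 : ℝ) ^ c ≤ (max (gOmega G) (gAlpha G) : ℕ) := by
  have hI : ∀ G ∈ I, ∀ H : GraphOn, Embeds H G → H ∈ I := hI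
  obtain ⟨ε₀, hε₀, hSEH⟩ := hEH
  set ε : ℝ := min ε₀ (1/2) with hεdef
  have hε : 0 < ε := lt_min hε₀ (by norm_num)
  have hε2 : ε ≤ 1/2 := min_le_right _ _
  have hinv : (2:ℝ) ≤ ε⁻¹ := by
    rw [show (2:ℝ) = (1/2)⁻¹ by norm_num]
    exact inv_anti₀ hε hε2
  set L : ℝ := Real.log ε⁻¹ with hLdef
  have hLpos : 0 < L := Real.log_pos (by linarith)
  set c : ℝ := Real.log 2 / L with hcdef
  have hc : 0 < c := div_pos (Real.log_pos one_lt_two) hLpos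
  have hεc : ε ^ c = 1/2 := by
    rw [Real.rpow_def_of_pos hε]
    have hlog : Real.log ε = -L := by rw [hLdef, Real.log_inv]; ring
    rw [hlog, hcdef, show -L * (Real.log 2 / L) = -Real.log 2 by field_simp]
    rw [Real.exp_neg, Real.exp_log (by norm_num : (0:ℝ) < 2)]
    norm_num
  have main : ∀ n : ℕ, ∀ G ∈ I, G.1 = n → (n:ℝ) ^ c ≤ ((gOmega G * gAlpha G : ℕ) : ℝ) := by
    intro n
    induction n using Nat.strong_induction_on with
    | _ n IH =>
      intro G hG hn
      rcases Nat.lt_or_ge n 2 with h2 | h2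
      · interval_cases n
        · rw [Nat.cast_zero, Real.zero_rpow hc.ne']
          positivity
        · rw [Nat.cast_one, Real.one_rpow]
          have hω := one_le_gOmega G (by omega)
          have hα : 1 ≤ gAlpha G := by
            rw [← gOmega_gc]
            exact one_le_gOmega (gc G) (by show 1 ≤ G.1; omega)
          exact_mod_cast Nat.one_le_iff_ne_zero.mpr (Nat.mul_ne_zero (by omega) (by omega))
      · obtain ⟨A, B, hd, hA, hB, hcase⟩ := hSEH G hG (by omega)
        replace hA : ε₀ * (n:ℝ) ≤ (A.card:ℝ) := by rw [← hn]; exact hA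
        replace hB : ε₀ * (n:ℝ) ≤ (B.card:ℝ) := by rw [← hn]; exact hB
        have hnpos : (0:ℝ) < n := by exact_mod_cast Nat.lt_of_lt_of_le Nat.zero_lt_two h2
        have hεn : 0 < ε * n := by positivity
        have hAc : ε * n ≤ (A.card:ℝ) :=
          le_trans (mul_le_mul_of_nonneg_right (min_le_left _ _) hnpos.le) hA
        have hBc : ε * n ≤ (B.card:ℝ) :=
          le_trans (mul_le_mul_of_nonneg_right (min_le_left _ _) hnpos.le) hB
        have hA1 : 1 ≤ A.card := by
          have : (0:ℝ) < A.card := lt_of_lt_of_le hεn hAc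
          exact_mod_cast Nat.one_le_iff_ne_zero.mpr (by exact_mod_cast this.ne')
        have hB1 : 1 ≤ B.card := by
          have : (0:ℝ) < B.card := lt_of_lt_of_le hεn hBc
          exact_mod_cast Nat.one_le_iff_ne_zero.mpr (by exact_mod_cast this.ne')
        have hsum : A.card + B.card ≤ n := by
          have h1 : (A ∪ B).card = A.card + B.card := Finset.card_union_of_disjoint hd
          have h2' : (A ∪ B).card ≤ G.1 := by
            simpa using Finset.card_le_univ (A ∪ B)
          omega
        have hIA : ind G A ∈ I := hI G hG _ (ind_embeds G A)
        have hIB : ind G B ∈ I := hI G hG _ (ind_embeds G B)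
        have ihA := IH A.card (by omega) (ind G A) hIA rfl
        have ihB := IH B.card (by omega) (ind G B) hIB rfl
        have hprod : gOmega (ind G A) * gAlpha (ind G A)
            + gOmega (ind G B) * gAlpha (ind G B) ≤ gOmega G * gAlpha G := by
          rcases hcase with h | h
          · exact prod_ineq G A B hd h
          · exact prod_ineq' G A B hd h
        have h1 : (ε * n) ^ c ≤ (A.card:ℝ)^c := Real.rpow_le_rpow hεn.le hAc hc.le
        have h2' : (ε * n) ^ c ≤ (B.card:ℝ)^c := Real.rpow_le_rpow hεn.le hBc hc.le
        have hn2 : (n:ℝ)^c = 2 * (ε*n)^c := by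
          rw [Real.mul_rpow hε.le (Nat.cast_nonneg n), hεc]
          ring
        calc (n:ℝ)^c = 2*(ε*n)^c := hn2
          _ ≤ (A.card:ℝ)^c + (B.card:ℝ)^c := by linarith
          _ ≤ ((gOmega (ind G A) * gAlpha (ind G A) : ℕ) : ℝ)
              + ((gOmega (ind G B) * gAlpha (ind G B) : ℕ) : ℝ) := add_le_add ihA ihB
          _ ≤ ((gOmega G * gAlpha G : ℕ) : ℝ) := by exact_mod_cast hprod
  refine ⟨c/2, by positivity, ?_⟩
  intro G hG
  have h := main G.1 G hG rfl
  set M : ℕ := max (gOmega G) (gAlpha G) with hM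
  have hsq : ((gOmega G * gAlpha G : ℕ):ℝ) ≤ (M:ℝ)^2 := by
    push_cast
    have h1 : (gOmega G : ℝ) ≤ M := by exact_mod_cast le_max_left _ _
    have h2 : (gAlpha G : ℝ) ≤ M := by exact_mod_cast le_max_right _ _
    have h3 := mul_le_mul h1 h2 (by positivity) (by positivity)
    nlinarith [h3]
  have hkey : ((G.1:ℝ)^(c/2))^2 ≤ (M:ℝ)^2 := by
    rw [← Real.rpow_natCast ((G.1:ℝ)^(c/2)) 2, ← Real.rpow_mul (Nat.cast_nonneg _)]
    rw [show c/2 * ((2:ℕ):ℝ) = c by push_cast; ring]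
    exact h.trans hsq
  exact (pow_le_pow_iff_left₀ (Real.rpow_nonneg (Nat.cast_nonneg _) _) (Nat.cast_nonneg M) two_ne_zero).mp hkey
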